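/- For reals q ≥ 2n'α with n' > 0, α ≥ 1: q^α ≥ n'·α·(q + n')^{α−1}. -/
import Mathlib


theorem large_q_derivative_bound
    (q n' α : ℝ) (hn : 0 < n') (hα : 1 ≤ α) (hq : 2 * n' * α ≤ q) :
    q ^ α ≥ n' * α * (q + n') ^ (α - 1) := by
  have hα0 : 0 < α := lt_of_lt_of_le one_pos hα
  have hq0 : 0 < q := lt_of_lt_of_le (by nlinarith) hq
  -- split (q+n')^{α-1} = q^{α-1} * (1+n'/q)^{α-1}
  have hsplit : (q + n') ^ (α - 1) = q ^ (α - 1) * (1 + n' / q) ^ (α - 1) := by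
    rw [← Real.mul_rpow (le_of_lt hq0) (by positivity)]
    rw [mul_add, mul_one, mul_div_cancel₀ _ (ne_of_gt hq0)]
  have hratio : n' / q ≤ 1 / (2 * α) := by
    rw [div_le_div_iff₀ hq0 (by positivity)]
    nlinarith
  have hbound : (1 + n' / q) ^ (α - 1) ≤ 2 := by
    have h1 : (1 + n' / q) ^ (α - 1) ≤ Real.exp (n' / q) ^ (α - 1) := by
      apply Real.rpow_le_rpow (by positivity) _ (by linarith)
      linarith [Real.add_one_le_exp (n' / q)]
    have h2 : Real.exp (n' / q) ^ (α - 1) = Real.exp (n' / q * (α - 1)) := by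
      rw [← Real.exp_mul]
    have h3 : n' / q * (α - 1) ≤ 1 / 2 := by
      have : n' / q * (α - 1) ≤ 1 / (2 * α) * (α - 1) := by
        apply mul_le_mul_of_nonneg_right hratio (by linarith)
      calc n' / q * (α - 1) ≤ 1 / (2 * α) * (α - 1) := this
        _ ≤ 1 / 2 := by
          rw [div_mul_eq_mul_div, one_mul, div_le_div_iff₀ (by positivity) two_pos]
          nlinarith
    have h4 : Real.exp (n' / q * (α - 1)) ≤ 2 := by
      calc Real.exp (n' / q * (α - 1)) ≤ Real.exp (Real.log 2) := by
            apply Real.exp_le_exp.mpr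
            linarith [Real.log_two_gt_d9]
        _ = 2 := Real.exp_log two_pos
    linarith [h1, h2 ▸ h4]
  have hpos : 0 < q ^ (α - 1) := Real.rpow_pos_of_pos hq0 _
  have key : n' * α * (q + n') ^ (α - 1) ≤ q * q ^ (α - 1) := by
    rw [hsplit]
    calc n' * α * (q ^ (α - 1) * (1 + n' / q) ^ (α - 1))
        ≤ n' * α * (q ^ (α - 1) * 2) := by
          apply mul_le_mul_of_nonneg_left _ (by positivity)
          exact mul_le_mul_of_nonneg_left hbound (le_of_lt hpos)
      _ = 2 * n' * α * q ^ (α - 1) := by ring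
      _ ≤ q * q ^ (α - 1) := mul_le_mul_of_nonneg_right hq (le_of_lt hpos)
  have : q * q ^ (α - 1) = q ^ α := by
    nth_rewrite 1 [← Real.rpow_one q]
    rw [← Real.rpow_add hq0]
    ring_nf
  linarith [key, this ▸ key]
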